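/- The number of colored permutations in Z_α ≀ S_n with last color 0 and flag descent statistic equal to k equals the number of such permutations with flag descent statistic equal to α(n−1) − k, for every integer k. -/
import Mathlib


open Finset Polynomial

/-- The `i`-th position (0-indexed) among the first `n-1` positions, as an element of `Fin n`. -/
def lo (n : ℕ) (i : Fin (n - 1)) : Fin n := ⟨i.val, by have := i.isLt; omega⟩

/-- The `(i+1)`-st position, as an element of `Fin n`. -/
def hi (n : ℕ) (i : Fin (n - 1)) : Fin n := ⟨i.val + 1, by have := i.isLt; omega⟩

/-- The colored descent number `d(w)` of a colored permutation, given by the underlying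
permutation `w` and the color vector `c`. -/
def cdes {n α : ℕ} (w : Equiv.Perm (Fin n)) (c : Fin n → ZMod α) : ℕ :=
  (univ.filter (fun i : Fin (n - 1) =>
    c (lo n i) ≠ c (hi n i) ∨ (c (lo n i) = c (hi n i) ∧ w (hi n i) < w (lo n i)))).card

/-- The flag descent statistic of a colored permutation. -/
def flagStat {n α : ℕ} (w : Equiv.Perm (Fin n)) (c : Fin n → ZMod α) : ℕ :=
  α * (univ.filter (fun i : Fin (n - 1) =>
        c (lo n i) = c (hi n i) ∧ w (hi n i) < w (lo n i))).card
  + α * (univ.filter (fun i : Fin (n - 1) =>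
        (c (lo n i)).val < (c (hi n i)).val)).card
  + (if h : 0 < n then (c ⟨0, h⟩).val else 0)

/-- The classical descent number of a permutation. -/
def des {n : ℕ} (w : Equiv.Perm (Fin n)) : ℕ :=
  (univ.filter (fun i : Fin (n - 1) => w (hi n i) < w (lo n i))).card

/-- The reversal of the underlying permutation (in one-line notation). -/
def rPerm {n : ℕ} (w : Equiv.Perm (Fin n)) : Equiv.Perm (Fin n) :=
  (Fin.revPerm : Equiv.Perm (Fin n)).trans w

/-- The reversed color vector with `c 0` subtracted from every color. -/
def rCol {n α : ℕ} (c : Fin n → ZMod α) : Fin n → ZMod α :=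
  fun i => c i.rev - (if h : 0 < n then c ⟨0, h⟩ else 0)

lemma my_val_sub {α : ℕ} [NeZero α] (a t : ZMod α) :
    (a - t).val = if t.val ≤ a.val then a.val - t.val else a.val + α - t.val := by
  split_ifs with h
  · exact ZMod.val_sub h
  · have hne : a ≠ t := by intro e; subst e; omega
    have h2 : (t - a).val = t.val - a.val := ZMod.val_sub (by omega)
    have h3 : t - a ≠ 0 := sub_ne_zero.mpr hne.symm
    rw [show a - t = -(t - a) by ring, ZMod.neg_val, if_neg h3, h2]
    have := ZMod.val_lt t
    omega

lemma pair_ind {α : ℕ} [NeZero α] (a b t : ZMod α) (hab : a ≠ b) :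
    ((if a.val < b.val then 1 else 0) + (if (b - t).val < (a - t).val then 1 else 0) : ℤ)
      = 1 + (if a.val < t.val then 1 else 0) - (if b.val < t.val then 1 else 0) := by
  have hne : a.val ≠ b.val := fun h => hab (ZMod.val_injective _ h)
  have ha := ZMod.val_lt a
  have hb := ZMod.val_lt b
  have ht := ZMod.val_lt t
  rw [my_val_sub, my_val_sub]
  split_ifs <;> omega

lemma per_pos {α : ℕ} [NeZero α] (a b t : ZMod α) {β : Type} [LinearOrder β]
    (u v : β) (huv : u ≠ v) :
    ((if b - t = a - t ∧ u < v then 1 else 0)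
     + (if (b - t).val < (a - t).val then 1 else 0)
     + ((if a = b ∧ v < u then 1 else 0)
     + (if a.val < b.val then 1 else 0)) : ℤ)
    = 1 + (if a.val < t.val then 1 else 0) - (if b.val < t.val then 1 else 0) := by
  by_cases hab : a = b
  · subst hab
    simp only [lt_irrefl, if_false, true_and, and_true, eq_self_iff_true]
    rcases huv.lt_or_gt with h | h
    · rw [if_pos h, if_neg (not_lt.mpr h.le)]; ring
    · rw [if_neg (not_lt.mpr h.le), if_pos h]; ring
  · have h' : ¬ (b - t = a - t) := fun e => hab (sub_left_inj.mp e).symm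
    rw [if_neg (show ¬(b - t = a - t ∧ u < v) from fun hh => h' hh.1),
        if_neg (show ¬(a = b ∧ v < u) from fun hh => hab hh.1)]
    have := pair_ind a b t hab
    linarith

lemma key {n α : ℕ} (hn : 0 < n) [NeZero α] (w : Equiv.Perm (Fin n))
    (c : Fin n → ZMod α) (hc : c ⟨n - 1, by omega⟩ = 0) :
    (flagStat (rPerm w) (rCol c) : ℤ) + (flagStat w c : ℤ) = (α : ℤ) * (n - 1 : ℕ) := by
  classical
  set t : ZMod α := c ⟨0, hn⟩ with ht
  have hrev0 : (⟨0, hn⟩ : Fin n).rev = ⟨n - 1, by omega⟩ := by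
    ext; simp [Fin.rev]
  have hrCol : ∀ i : Fin n, rCol c i = c i.rev - t := by
    intro i; simp [rCol, dif_pos hn, ht]
  have hrPerm : ∀ i : Fin n, rPerm w i = w i.rev := fun i => rfl
  have hlo : ∀ j : Fin (n - 1), lo n j.rev = (hi n j).rev := by
    intro j; have := j.isLt; ext; simp [lo, hi, Fin.rev]; omega
  have hhi : ∀ j : Fin (n - 1), hi n j.rev = (lo n j).rev := by
    intro j; have := j.isLt; ext; simp [lo, hi, Fin.rev]; omega
  have cardsum : ∀ p : Fin (n - 1) → Prop, ∀ inst : DecidablePred p,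
      ((univ.filter p).card : ℤ) = ∑ j : Fin (n - 1), (if p j then 1 else 0 : ℤ) := by
    intro p inst
    rw [Finset.card_filter]
    push_cast
    exact Finset.sum_congr rfl (fun x _ => by split_ifs <;> simp)
  have sumrev : ∀ f : Fin (n - 1) → ℤ, ∑ j : Fin (n - 1), f j = ∑ j : Fin (n - 1), f j.rev :=
    fun f => (Fintype.sum_equiv (Fin.revPerm) _ _ (fun j => rfl)).symm
  unfold flagStat
  rw [dif_pos hn, dif_pos hn]
  push_cast
  rw [cardsum _ _, cardsum _ _, cardsum _ _, cardsum _ _]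
  rw [sumrev (fun j => if rCol c (lo n j) = rCol c (hi n j) ∧ rPerm w (hi n j) < rPerm w (lo n j) then 1 else 0),
      sumrev (fun j => if (rCol c (lo n j)).val < (rCol c (hi n j)).val then 1 else 0)]
  simp only [hrCol, hrPerm, hlo, hhi, Fin.rev_rev]
  -- per-position identity
  have hwne : ∀ j : Fin (n - 1), w (hi n j) ≠ w (lo n j) := by
    intro j e
    have : hi n j = lo n j := w.injective e
    have := congrArg Fin.val this
    simp [lo, hi] at this
  have main : ∀ j : Fin (n - 1),
      (((if c (hi n j) - t = c (lo n j) - t ∧ w (lo n j) < w (hi n j) then 1 else 0)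
       + (if (c (hi n j) - t).val < (c (lo n j) - t).val then 1 else 0)) : ℤ)
      + ((if c (lo n j) = c (hi n j) ∧ w (hi n j) < w (lo n j) then 1 else 0)
       + (if (c (lo n j)).val < (c (hi n j)).val then 1 else 0))
      = 1 + (if (c (lo n j)).val < t.val then 1 else 0)
          - (if (c (hi n j)).val < t.val then 1 else 0) :=
    fun j => per_pos _ _ _ _ _ (hwne j).symm
  -- telescoping
  set G : ℕ → ℤ := fun m => if h : m < n then (if (c ⟨m, h⟩).val < t.val then 1 else 0) else 0
    with hG
  have tele : (∑ j : Fin (n - 1), ((1 : ℤ)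
      + (if (c (lo n j)).val < t.val then 1 else 0)
      - (if (c (hi n j)).val < t.val then 1 else 0)))
      = ((n - 1 : ℕ) : ℤ) + (G 0 - G (n - 1)) := by
    have step : ∀ j : Fin (n - 1), ((1 : ℤ)
        + (if (c (lo n j)).val < t.val then 1 else 0)
        - (if (c (hi n j)).val < t.val then 1 else 0))
        = (fun m => 1 + G m - G (m + 1)) j.val := by
      intro j
      have h1 : j.val < n := by have := j.isLt; omega
      have h2 : j.val + 1 < n := by have := j.isLt; omega
      simp only [hG, dif_pos h1, dif_pos h2]
      rfl
    rw [Finset.sum_congr rfl (fun j _ => step j),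
      Fin.sum_univ_eq_sum_range (fun m => 1 + G m - G (m + 1)) (n - 1)]
    have : ∀ i ∈ Finset.range (n - 1), (1 + G i - G (i + 1) : ℤ) = 1 + (G i - G (i + 1)) := by
      intro i _; ring
    rw [Finset.sum_congr rfl this, Finset.sum_add_distrib, Finset.sum_const,
      Finset.card_range, Finset.sum_range_sub' G (n - 1)]
    push_cast; ring
  have hG0 : G 0 = 0 := by
    simp only [hG, dif_pos hn]
    rw [if_neg (lt_irrefl _)]
  have hGlast : G (n - 1) = if 0 < t.val then 1 else 0 := by
    have h1 : n - 1 < n := by omega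
    simp only [hG, dif_pos h1, hc, ZMod.val_zero]
  -- combine the four sums
  have hv1 : rCol c ⟨0, hn⟩ = -t := by rw [hrCol, hrev0, hc]; ring
  have hsum : (∑ j : Fin (n - 1), ((if c (hi n j) - t = c (lo n j) - t ∧ w (lo n j) < w (hi n j) then 1 else 0 : ℤ)))
      + (∑ j : Fin (n - 1), (if (c (hi n j) - t).val < (c (lo n j) - t).val then 1 else 0 : ℤ))
      + ((∑ j : Fin (n - 1), (if c (lo n j) = c (hi n j) ∧ w (hi n j) < w (lo n j) then 1 else 0 : ℤ))
      + (∑ j : Fin (n - 1), (if (c (lo n j)).val < (c (hi n j)).val then 1 else 0 : ℤ)))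
      = ((n - 1 : ℕ) : ℤ) - (if 0 < t.val then 1 else 0) := by
    rw [← Finset.sum_add_distrib, ← Finset.sum_add_distrib, ← Finset.sum_add_distrib,
      Finset.sum_congr rfl (fun j _ => main j), tele, hG0, hGlast]
    ring
  have hneg : (((-t).val : ℤ)) + t.val = α * (if 0 < t.val then 1 else 0) := by
    by_cases h : t = 0
    · simp [h]
    · have ht0 : 0 < t.val := Nat.pos_of_ne_zero (fun e => h ((ZMod.val_eq_zero t).mp e))
      rw [ZMod.neg_val, if_neg h, if_pos ht0]
      have := ZMod.val_lt t
      push_cast; omega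
  rw [hrev0, hc, zero_sub]
  linear_combination (α : ℤ) * hsum + hneg

lemma rPerm_invol {n : ℕ} (w : Equiv.Perm (Fin n)) : rPerm (rPerm w) = w := by
  ext x
  simp [rPerm]

lemma rCol_last {n α : ℕ} (hn : 0 < n) (c : Fin n → ZMod α)
    (hc : c ⟨n - 1, by omega⟩ = 0) : rCol c ⟨n - 1, by omega⟩ = 0 := by
  have h : (⟨n - 1, by omega⟩ : Fin n).rev = ⟨0, hn⟩ := by
    ext; simp [Fin.rev]; omega
  simp [rCol, dif_pos hn, h]

lemma rCol_invol {n α : ℕ} (hn : 0 < n) (c : Fin n → ZMod α)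
    (hc : c ⟨n - 1, by omega⟩ = 0) : rCol (rCol c) = c := by
  have h0 : (⟨0, hn⟩ : Fin n).rev = ⟨n - 1, by omega⟩ := by
    ext; simp [Fin.rev]
  funext i
  simp only [rCol, dif_pos hn, Fin.rev_rev, h0, hc]
  ring

/-- The number of colored permutations with last color `0` and flag descent statistic `k`
equals the number with flag descent statistic `α(n-1) - k`, for every integer `k`. -/
theorem flag_statistic_symmetric_counts (n α : ℕ) (hn : 0 < n) (hα : 0 < α) [NeZero α]
    (k : ℤ) :
    ((univ : Finset (Equiv.Perm (Fin n) × (Fin n → ZMod α))).filter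
        (fun p => p.2 ⟨n - 1, by omega⟩ = 0 ∧ (flagStat p.1 p.2 : ℤ) = k)).card
      = ((univ : Finset (Equiv.Perm (Fin n) × (Fin n → ZMod α))).filter
        (fun p => p.2 ⟨n - 1, by omega⟩ = 0 ∧
          (flagStat p.1 p.2 : ℤ) = (α : ℤ) * (n - 1 : ℕ) - k)).card := by
  classical
  apply Finset.card_bij' (fun p _ => (rPerm p.1, rCol p.2)) (fun p _ => (rPerm p.1, rCol p.2))
  case hi =>
    intro p hp
    rw [Finset.mem_filter] at hp ⊢
    obtain ⟨-, hlast, hflag⟩ := hp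
    refine ⟨Finset.mem_univ _, rCol_last hn p.2 hlast, ?_⟩
    have := key hn p.1 p.2 hlast
    dsimp only
    omega
  case hj =>
    intro p hp
    rw [Finset.mem_filter] at hp ⊢
    obtain ⟨-, hlast, hflag⟩ := hp
    refine ⟨Finset.mem_univ _, rCol_last hn p.2 hlast, ?_⟩
    have := key hn p.1 p.2 hlast
    dsimp only
    omega
  case left_inv =>
    intro p hp
    rw [Finset.mem_filter] at hp
    obtain ⟨-, hlast, -⟩ := hp
    dsimp only
    rw [Prod.ext_iff]
    exact ⟨rPerm_invol p.1, rCol_invol hn p.2 hlast⟩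
  case right_inv =>
    intro p hp
    rw [Finset.mem_filter] at hp
    obtain ⟨-, hlast, -⟩ := hp
    dsimp only
    rw [Prod.ext_iff]
    exact ⟨rPerm_invol p.1, rCol_invol hn p.2 hlast⟩
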